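/- Assume D = 0 and Re(λ_i) > 0 for all i = 1,…,n (all poles are antistable). Define the reflected (stable) transfer function H⁻(s) := Σ_{i=1}^n (1/(s+λ_i))·φ_i. Then lim_{ω→+∞} ‖H‖²_{H2,ω} = lim_{ω→+∞} ‖H⁻‖²_{H2,ω}; that is, the limiting squared frequency-limited H2-norm of the antistable system equals the squared H2-norm of its stable reflection. -/

import Mathlib

open Complex Matrix MeasureTheory intervalIntegral BigOperators

/-- Strictly proper transfer function `H(s) = Σᵢ (s − λᵢ)⁻¹ • φᵢ`. -/
noncomputable def transferH {n n_u n_y : ℕ} (lam : Fin n → ℂ)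
    (φ : Fin n → Matrix (Fin n_y) (Fin n_u) ℂ) (s : ℂ) : Matrix (Fin n_y) (Fin n_u) ℂ :=
  ∑ i, (s - lam i)⁻¹ • φ i

/-- Squared frequency-limited H2-norm:
`‖H‖²_{H2,ω} = (1/(2π)) ∫_{−ω}^{ω} tr(H(iν)·H(−iν)ᵀ) dν`. -/
noncomputable def h2wSq {n n_u n_y : ℕ} (lam : Fin n → ℂ)
    (φ : Fin n → Matrix (Fin n_y) (Fin n_u) ℂ) (ω : ℝ) : ℂ :=
  (2 * (Real.pi : ℂ))⁻¹ * ∫ ν : ℝ in (-ω)..ω,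
    (transferH lam φ (Complex.I * (ν : ℂ)) *
      (transferH lam φ (-(Complex.I * (ν : ℂ))))ᵀ).trace

lemma quad_bound (r m : ℝ) (hr : r ≠ 0) :
    ∃ c > 0, ∀ ν : ℝ, c * (1 + ν ^ 2) ≤ r ^ 2 + (ν - m) ^ 2 := by
  refine ⟨r ^ 2 / (2 * (1 + r ^ 2 + 2 * m ^ 2)), by positivity, fun ν => ?_⟩
  rw [div_mul_eq_mul_div, div_le_iff₀ (by positivity)]
  nlinarith [mul_nonneg (sq_nonneg r) (sq_nonneg (ν - 2 * m)), sq_nonneg (r * m),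
    sq_nonneg (r * (ν - m)), mul_nonneg (sq_nonneg m) (sq_nonneg (ν - m)), sq_nonneg (ν - m)]

lemma fac_ne (a : ℂ) (ha : a.re ≠ 0) (ν : ℝ) : Complex.I * (ν : ℂ) - a ≠ 0 := by
  intro h
  apply ha
  have := congrArg Complex.re h
  simpa using this.symm

lemma continuous_fac (a : ℂ) (ha : a.re ≠ 0) :
    Continuous (fun ν : ℝ => (Complex.I * (ν : ℂ) - a)⁻¹) :=
  Continuous.inv₀ ((continuous_const.mul Complex.continuous_ofReal).sub continuous_const)
    (fun ν => fac_ne a ha ν)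

lemma normSq_fac (a : ℂ) (ν : ℝ) :
    Complex.normSq (Complex.I * (ν : ℂ) - a) = a.re ^ 2 + (ν - a.im) ^ 2 := by
  simp [Complex.normSq_apply, Complex.sub_re, Complex.sub_im, Complex.mul_re, Complex.mul_im]
  ring

lemma integrable_g (a b : ℂ) (ha : a.re ≠ 0) (hb : b.re ≠ 0) :
    Integrable (fun ν : ℝ =>
      (Complex.I * (ν : ℂ) - a)⁻¹ * (-(Complex.I * (ν : ℂ)) - b)⁻¹) := by
  obtain ⟨c₁, hc₁, h₁⟩ := quad_bound a.re a.im ha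
  obtain ⟨c₂, hc₂, h₂⟩ := quad_bound b.re b.im hb
  set C : ℝ := Real.sqrt (c₁ * c₂)⁻¹ with hC
  have key : ∀ ν : ℝ, ‖(Complex.I * (ν : ℂ) - a)⁻¹ * (-(Complex.I * (ν : ℂ)) - b)⁻¹‖
      ≤ C * (1 + ν ^ 2)⁻¹ := by
    intro ν
    have hx : (0:ℝ) ≤ ‖(Complex.I * (ν : ℂ) - a)⁻¹ * (-(Complex.I * (ν : ℂ)) - b)⁻¹‖ :=
      norm_nonneg _
    have hy : (0:ℝ) ≤ C * (1 + ν ^ 2)⁻¹ := by positivity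
    rw [← Real.sqrt_sq hx, ← Real.sqrt_sq hy]
    apply Real.sqrt_le_sqrt
    have hn1 : Complex.normSq (Complex.I * (ν : ℂ) - a) = a.re ^ 2 + (ν - a.im) ^ 2 :=
      normSq_fac a ν
    have hrw : -(Complex.I * (ν : ℂ)) - b = Complex.I * ((-ν : ℝ) : ℂ) - b := by
      push_cast; ring
    have hn2 : Complex.normSq (-(Complex.I * (ν : ℂ)) - b) = b.re ^ 2 + (-ν - b.im) ^ 2 := by
      rw [hrw]; exact normSq_fac b (-ν)
    have e1 : c₁ * (1 + ν ^ 2) ≤ Complex.normSq (Complex.I * (ν : ℂ) - a) := by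
      rw [hn1]; exact h₁ ν
    have e2 : c₂ * (1 + ν ^ 2) ≤ Complex.normSq (-(Complex.I * (ν : ℂ)) - b) := by
      rw [hn2]
      have := h₂ (-ν)
      simpa using this
    have hxsq : ‖(Complex.I * (ν : ℂ) - a)⁻¹ * (-(Complex.I * (ν : ℂ)) - b)⁻¹‖ ^ 2
        = (Complex.normSq (Complex.I * (ν : ℂ) - a))⁻¹ *
          (Complex.normSq (-(Complex.I * (ν : ℂ)) - b))⁻¹ := by
      rw [norm_mul, mul_pow, norm_inv, norm_inv, inv_pow, inv_pow,
        Complex.sq_norm, Complex.sq_norm]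
    rw [hxsq]
    have i1 : (Complex.normSq (Complex.I * (ν : ℂ) - a))⁻¹ ≤ (c₁ * (1 + ν ^ 2))⁻¹ :=
      inv_anti₀ (by positivity) e1
    have i2 : (Complex.normSq (-(Complex.I * (ν : ℂ)) - b))⁻¹ ≤ (c₂ * (1 + ν ^ 2))⁻¹ :=
      inv_anti₀ (by positivity) e2
    have hstep : (Complex.normSq (Complex.I * (ν : ℂ) - a))⁻¹ *
        (Complex.normSq (-(Complex.I * (ν : ℂ)) - b))⁻¹
        ≤ (c₁ * (1 + ν ^ 2))⁻¹ * (c₂ * (1 + ν ^ 2))⁻¹ :=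
      mul_le_mul i1 i2 (inv_nonneg.mpr (Complex.normSq_nonneg _)) (by positivity)
    refine hstep.trans (le_of_eq ?_)
    rw [mul_pow, hC, Real.sq_sqrt (by positivity), mul_inv, mul_inv, mul_inv, sq]
    ring
  refine Integrable.mono' (integrable_inv_one_add_sq.const_mul C) ?_ (ae_of_all _ key)
  refine Continuous.aestronglyMeasurable ?_
  refine (continuous_fac a ha).mul ?_
  apply Continuous.inv₀
  · exact (continuous_const.mul Complex.continuous_ofReal).neg.sub continuous_const
  · intro ν h
    apply fac_ne b hb (-ν)
    rw [← h]; push_cast; ring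

lemma trace_expand {n n_u n_y : ℕ} (lam : Fin n → ℂ)
    (φ : Fin n → Matrix (Fin n_y) (Fin n_u) ℂ) (s t : ℂ) :
    (transferH lam φ s * (transferH lam φ t)ᵀ).trace
      = ∑ i, ∑ j, ((s - lam i)⁻¹ * (t - lam j)⁻¹) * (φ i * (φ j)ᵀ).trace := by
  simp [transferH, Matrix.transpose_sum, Matrix.sum_mul, Matrix.mul_sum,
    Matrix.transpose_smul, Matrix.smul_mul, Matrix.mul_smul, Matrix.trace_sum,
    Matrix.trace_smul, smul_smul, smul_eq_mul, mul_assoc]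
  simp only [Finset.mul_sum]
  rw [Finset.sum_comm]
  exact Finset.sum_congr rfl fun i _ => Finset.sum_congr rfl fun j _ => by ring

lemma transferH_neg {n n_u n_y : ℕ} (lam : Fin n → ℂ)
    (φ : Fin n → Matrix (Fin n_y) (Fin n_u) ℂ) (s : ℂ) :
    transferH (fun i => -lam i) φ s = -(transferH lam φ (-s)) := by
  unfold transferH
  rw [← Finset.sum_neg_distrib]
  refine Finset.sum_congr rfl fun i _ => ?_
  rw [← neg_smul]
  congr 1
  rw [show -s - lam i = -(s - -lam i) by ring, inv_neg, neg_neg]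

lemma trace_mul_transpose_comm {p q : Type*} [Fintype p] [Fintype q]
    (X Y : Matrix p q ℂ) : (X * Yᵀ).trace = (Y * Xᵀ).trace := by
  rw [Matrix.trace_mul_comm, ← Matrix.trace_transpose (Yᵀ * X), Matrix.transpose_mul,
    Matrix.transpose_transpose, Matrix.trace_mul_comm]

lemma h2wSq_neg {n n_u n_y : ℕ} (lam : Fin n → ℂ)
    (φ : Fin n → Matrix (Fin n_y) (Fin n_u) ℂ) (ω : ℝ) :
    h2wSq (fun i => -lam i) φ ω = h2wSq lam φ ω := by
  unfold h2wSq
  congr 1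
  refine intervalIntegral.integral_congr fun ν _ => ?_
  have hA := transferH_neg lam φ (Complex.I * (ν : ℂ))
  have hB := transferH_neg lam φ (-(Complex.I * (ν : ℂ)))
  rw [neg_neg] at hB
  rw [hA, hB, Matrix.transpose_neg, Matrix.neg_mul, Matrix.mul_neg, neg_neg]
  exact trace_mul_transpose_comm _ _

open Filter Topology in
theorem stmt_5 (n n_u n_y : ℕ) (hn : 0 < n) (hnu : 0 < n_u) (hny : 0 < n_y)
    (lam : Fin n → ℂ) (hdist : Function.Injective lam)
    (φ : Fin n → Matrix (Fin n_y) (Fin n_u) ℂ)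
    (hanti : ∀ i, 0 < (lam i).re) :
    ∃ L : ℂ,
      Tendsto (fun ω : ℝ => h2wSq lam φ ω) atTop (nhds L) ∧
      Tendsto (fun ω : ℝ => h2wSq (fun i => -lam i) φ ω) atTop (nhds L) := by
  set f : ℝ → ℂ := fun ν =>
    (transferH lam φ (Complex.I * (ν : ℂ)) *
      (transferH lam φ (-(Complex.I * (ν : ℂ))))ᵀ).trace with hf
  have hfeq : f = fun ν : ℝ => ∑ i, ∑ j,
      ((Complex.I * (ν : ℂ) - lam i)⁻¹ * (-(Complex.I * (ν : ℂ)) - lam j)⁻¹) *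
        (φ i * (φ j)ᵀ).trace :=
    funext fun ν => trace_expand lam φ _ _
  have hint : Integrable f := by
    rw [hfeq]
    refine integrable_finset_sum _ fun i _ => integrable_finset_sum _ fun j _ => ?_
    exact (integrable_g (lam i) (lam j) (ne_of_gt (hanti i)) (ne_of_gt (hanti j))).mul_const _
  have hmain : Tendsto (fun ω : ℝ => h2wSq lam φ ω) atTop
      (nhds ((2 * (Real.pi : ℂ))⁻¹ * ∫ ν : ℝ, f ν)) := by
    have h1 := MeasureTheory.intervalIntegral_tendsto_integral hint
      tendsto_neg_atTop_atBot tendsto_id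
    have h2 := h1.const_mul ((2 * (Real.pi : ℂ))⁻¹)
    simpa [h2wSq, hf] using h2
  refine ⟨(2 * (Real.pi : ℂ))⁻¹ * ∫ ν : ℝ, f ν, hmain, ?_⟩
  have : (fun ω : ℝ => h2wSq (fun i => -lam i) φ ω) = fun ω : ℝ => h2wSq lam φ ω :=
    funext fun ω => h2wSq_neg lam φ ω
  rw [this]
  exact hmain
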